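/- Let A be a uniform algebra on a compact metric space K. If K contains an analytic disc, i.e., there is a continuous injective map σ : D → K from the open unit disc D in C such that f ∘ σ is holomorphic on D for every f in A, then A does not have the countable approximation property. Equivalently: if A has the countable approximation property, then K contains no analytic disc. -/

import Mathlib

open Metric

/-- The uniform algebra `A` on the compact space `K` has the countable approximation
property: for each continuous `g` on `K` there are countably many compact subsets
`M n` covering `K` such that `g|‖M n‖` lies in the uniform closure of `A|‖M n‖`. -/
def CountableApproxProperty {K : Type*} [TopologicalSpace K]
    (A : Subalgebra ℂ C(K, ℂ)) : Prop :=
  ∀ g : C(K, ℂ), ∃ M : ℕ → Set K, (∀ n, IsCompact (M n)) ∧ (⋃ n, M n) = Set.univ ∧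
    ∀ n, g.restrict (M n) ∈
      closure ((fun f : C(K, ℂ) => f.restrict (M n)) '' (A : Set C(K, ℂ)))

/-- Complex conjugation is nowhere complex-differentiable. -/
lemma conj_not_differentiableAt (z : ℂ) :
    ¬ DifferentiableAt ℂ (fun w : ℂ => (starRingEnd ℂ) w) z := by
  intro h
  set f' := fderiv ℂ (fun w : ℂ => (starRingEnd ℂ) w) z with hf'
  have h1 : HasFDerivAt (fun w : ℂ => (starRingEnd ℂ) w) (f'.restrictScalars ℝ) z :=
    h.hasFDerivAt.restrictScalars ℝ
  have h2 : HasFDerivAt (fun w : ℂ => (starRingEnd ℂ) w)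
      (Complex.conjCLE.toContinuousLinearEquiv.toContinuousLinearMap) z := by
    exact Complex.conjCLE.hasFDerivAt (x := z)
  have heq := h1.unique h2
  have e1 : f' 1 = 1 := by
    have := congrArg (fun L : ℂ →L[ℝ] ℂ => L 1) heq
    simpa [Complex.conjCLE_apply] using this
  have eI' : f' Complex.I = -Complex.I := by
    have := congrArg (fun L : ℂ →L[ℝ] ℂ => L Complex.I) heq
    simpa [Complex.conjCLE_apply, Complex.conj_I] using this
  have eI : f' Complex.I = Complex.I := by
    have h3 : f' Complex.I = f' (Complex.I • (1 : ℂ)) := by simp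
    rw [h3, f'.map_smul, e1]
    simp
  rw [eI] at eI'
  have h4 : (2 : ℂ) * Complex.I = 0 := by linear_combination eI'
  simp [Complex.I_ne_zero] at h4

/-- Let `A` be a uniform algebra on a compact metric space `K`.  If `K`
contains an analytic disc — a continuous injective map `σ` from the open unit disc
`D ⊆ ℂ` into `K` such that `f ∘ σ` is holomorphic on `D` for every `f ∈ A` — then
`A` does not have the countable approximation property. -/
theorem stmt_8 {K : Type*} [MetricSpace K] [CompactSpace K]
    (A : Subalgebra ℂ C(K, ℂ)) (hclosed : IsClosed (A : Set C(K, ℂ)))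
    (hsep : ∀ x y : K, x ≠ y → ∃ f ∈ A, f x ≠ f y)
    (σ : ℂ → K) (hσc : ContinuousOn σ (ball (0 : ℂ) 1))
    (hσi : Set.InjOn σ (ball (0 : ℂ) 1))
    (hσh : ∀ f ∈ A, DifferentiableOn ℂ (fun z => f (σ z)) (ball (0 : ℂ) 1)) :
    ¬ CountableApproxProperty A := by
  intro hCAP
  set cb : Set ℂ := closedBall 0 (1/2) with hcbdef
  have hcbb : cb ⊆ ball 0 1 := closedBall_subset_ball (by norm_num)
  haveI : CompactSpace cb := isCompact_iff_compactSpace.mp (isCompact_closedBall _ _)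
  let e : C(cb, K) := ⟨fun z => σ z, (hσc.mono hcbb).restrict⟩
  have heinj : Function.Injective e := fun a b hab =>
    Subtype.ext (hσi (hcbb a.2) (hcbb b.2) hab)
  have hce : Topology.IsClosedEmbedding e := e.continuous.isClosedEmbedding heinj
  let φ : cb ≃ₜ Set.range ⇑e := hce.isEmbedding.toHomeomorph
  let h0 : C(Set.range ⇑e, ℂ) :=
    ⟨fun x => (starRingEnd ℂ) ((φ.symm x : cb) : ℂ),
     Complex.continuous_conj.comp (continuous_subtype_val.comp φ.symm.continuous)⟩
  obtain ⟨g, hg⟩ := h0.exists_restrict_eq hce.isClosed_range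
  have hgσ : ∀ z ∈ cb, g (σ z) = (starRingEnd ℂ) z := by
    intro z hz
    have hx : e ⟨z, hz⟩ ∈ Set.range ⇑e := ⟨⟨z, hz⟩, rfl⟩
    have h1 := ContinuousMap.congr_fun hg ⟨e ⟨z, hz⟩, hx⟩
    have hsymm : φ.symm ⟨e ⟨z, hz⟩, hx⟩ = ⟨z, hz⟩ := φ.symm_apply_apply ⟨z, hz⟩
    exact (by simpa [h0, hsymm] using h1 : g (e ⟨z, hz⟩) = (starRingEnd ℂ) z)
  obtain ⟨M, hMc, hMU, hMa⟩ := hCAP g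
  -- Baire category in the open ball of radius 1/2
  set B : Set ℂ := ball 0 (1/2) with hBdef
  have hBo : IsOpen B := isOpen_ball
  have hBcb : B ⊆ cb := ball_subset_closedBall
  haveI : LocallyCompactSpace B := hBo.locallyCompactSpace
  haveI : Nonempty B := ⟨⟨0, by simp [hBdef]⟩⟩
  have hσB : Continuous fun z : B => σ z :=
    (hσc.mono (hBcb.trans hcbb)).restrict
  let T : ℕ → Set B := fun n => (fun z : B => σ z) ⁻¹' (M n)
  have hTc : ∀ n, IsClosed (T n) := fun n => (hMc n).isClosed.preimage hσB
  have hTU : ⋃ n, T n = Set.univ := by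
    ext z
    simp only [Set.mem_iUnion, Set.mem_univ, iff_true, T, Set.mem_preimage]
    have : σ z ∈ ⋃ n, M n := hMU ▸ Set.mem_univ _
    simpa using this
  obtain ⟨n, z0, hz0⟩ := nonempty_interior_of_iUnion_of_closed hTc hTU
  obtain ⟨U, hUo, hUeq⟩ := isOpen_induced_iff.mp (isOpen_interior (s := T n))
  have hz0U : (z0 : ℂ) ∈ U ∩ B := ⟨by rw [← hUeq] at hz0; exact hz0, z0.2⟩
  obtain ⟨ε, hε, hball⟩ := Metric.isOpen_iff.mp (hUo.inter hBo) _ hz0U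
  have hballB : ball (z0 : ℂ) ε ⊆ B := fun z hz => (hball hz).2
  have hball1 : ball (z0 : ℂ) ε ⊆ ball 0 1 := fun z hz => hcbb (hBcb (hballB hz))
  have hballM : ball (z0 : ℂ) ε ⊆ σ ⁻¹' (M n) := by
    intro z hz
    have hzB : z ∈ B := (hball hz).2
    have h2 : (⟨z, hzB⟩ : B) ∈ Subtype.val ⁻¹' U := (hball hz).1
    rw [hUeq] at h2
    have h3 : (⟨z, hzB⟩ : B) ∈ T n := interior_subset h2
    exact h3
  -- extract a sequence from the closure
  haveI : CompactSpace (M n) := isCompact_iff_compactSpace.mp (hMc n)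
  obtain ⟨F, hFmem, hFt⟩ := mem_closure_iff_seq_limit.mp (hMa n)
  choose f hfA hfeq using hFmem
  have h1 : TendstoUniformly (fun m => ⇑(F m)) ⇑(g.restrict (M n)) Filter.atTop :=
    ContinuousMap.tendsto_iff_tendstoUniformly.mp hFt
  have h2 : TendstoUniformlyOn (fun m => ⇑(f m)) ⇑g Filter.atTop (M n) := by
    rw [tendstoUniformlyOn_iff_tendstoUniformly_comp_coe]
    have hGm : (fun m (x : M n) => f m x) = fun m => ⇑(F m) := by
      funext m
      rw [← hfeq m]
      rfl
    rw [hGm]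
    exact h1
  have h3 : TendstoUniformlyOn (fun m => ⇑(f m) ∘ σ) (⇑g ∘ σ) Filter.atTop (σ ⁻¹' M n) :=
    h2.comp σ
  have h4 := (h3.mono hballM).tendstoLocallyUniformlyOn
  have h5 : DifferentiableOn ℂ (⇑g ∘ σ) (ball (z0 : ℂ) ε) :=
    h4.differentiableOn
      (Filter.Eventually.of_forall fun m => (hσh (f m) (hfA m)).mono hball1)
      isOpen_ball
  have h6 : DifferentiableOn ℂ (fun w : ℂ => (starRingEnd ℂ) w) (ball (z0 : ℂ) ε) := by
    apply h5.congr
    intro z hz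
    exact (hgσ z (hBcb (hballB hz))).symm
  exact conj_not_differentiableAt z0
    (h6.differentiableAt (isOpen_ball.mem_nhds (mem_ball_self hε)))
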